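/- For every integer N ≥ 1, let F_N := {z ∈ ℂ : z^N = 1} be the set of N-th roots of unity. Then ∑_{z∈F_N} ∑_{w∈F_N, w≠z} ( log|z − w| − log max{1,|z|} − log max{1,|w|} ) = N · log N. In particular Mahler's estimate is attained with equality on F_N. -/

import Mathlib

/-- For `N ≥ 1` and `F` the set of `N`-th roots of unity in `ℂ`, the Fekete sum
`∑_{z∈F} ∑_{w∈F, w≠z} (log|z−w| − log max{1,|z|} − log max{1,|w|})` equals `N · log N`,
so Mahler's estimate is attained with equality. -/
theorem fekete_sum_roots_of_unity (N : ℕ) (hN : 1 ≤ N) (F : Finset ℂ)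
    (hF : ∀ z : ℂ, z ∈ F ↔ z ^ N = 1) :
    ∑ z ∈ F, ∑ w ∈ F.erase z,
      (Real.log (‖z - w‖) - Real.log (max 1 (‖z‖))
        - Real.log (max 1 (‖w‖)))
      = (N : ℝ) * Real.log (N : ℝ) := by
  classical
  have hNpos : 0 < N := hN
  have hprim := Complex.isPrimitiveRoot_exp N hNpos.ne'
  -- F is the nthRootsFinset
  have hFeq : F = Polynomial.nthRootsFinset N (1 : ℂ) := by
    ext z
    rw [hF, Polynomial.mem_nthRootsFinset hNpos]
  -- all elements of F have absolute value 1
  have habs : ∀ z ∈ F, ‖z‖ = 1 := by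
    intro z hz
    exact Complex.norm_eq_one_of_pow_eq_one ((hF z).mp hz) hNpos.ne'
  -- the polynomial identity
  have hpoly : (Polynomial.X ^ N - 1 : Polynomial ℂ)
      = ∏ w ∈ Polynomial.nthRootsFinset N (1 : ℂ), (Polynomial.X - Polynomial.C w) :=
    Polynomial.X_pow_sub_one_eq_prod hNpos hprim
  -- key product formula
  have key : ∀ z ∈ F, ∏ w ∈ F.erase z, (z - w) = (N : ℂ) * z ^ (N - 1) := by
    intro z hz
    have hz' : z ∈ (Polynomial.nthRootsFinset N (1 : ℂ)).val := by
      rw [← hFeq]; exact hz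
    have hderiv := congrArg Polynomial.derivative hpoly
    have := congrArg (Polynomial.eval z) hderiv
    rw [Polynomial.derivative_sub, Polynomial.derivative_one, Polynomial.derivative_X_pow,
      sub_zero] at this
    have hprod : (∏ w ∈ Polynomial.nthRootsFinset N (1 : ℂ), (Polynomial.X - Polynomial.C w))
        = ((Polynomial.nthRootsFinset N (1 : ℂ)).val.map (fun w => Polynomial.X - Polynomial.C w)).prod := rfl
    rw [hprod, Polynomial.eval_multiset_prod_X_sub_C_derivative hz'] at this
    simp only [Polynomial.eval_mul, Polynomial.eval_C, Polynomial.eval_pow,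
      Polynomial.eval_X] at this
    have h2 : ∏ w ∈ F.erase z, (z - w)
        = (Multiset.map (fun a => z - a) ((Polynomial.nthRootsFinset N (1 : ℂ)).val.erase z)).prod := by
      rw [hFeq, Finset.prod, Finset.erase_val]
    rw [h2, ← this]
  -- inner sum equals log N
  have hinner : ∀ z ∈ F, ∑ w ∈ F.erase z,
      (Real.log (‖z - w‖) - Real.log (max 1 (‖z‖))
        - Real.log (max 1 (‖w‖))) = Real.log N := by
    intro z hz
    have h1 : ∀ w ∈ F.erase z,
        (Real.log (‖z - w‖) - Real.log (max 1 (‖z‖))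
          - Real.log (max 1 (‖w‖))) = Real.log (‖z - w‖) := by
      intro w hw
      rw [habs z hz, habs w (Finset.mem_of_mem_erase hw)]
      simp
    rw [Finset.sum_congr rfl h1]
    have hne : ∀ w ∈ F.erase z, ‖z - w‖ ≠ 0 := by
      intro w hw
      have : z ≠ w := fun h => (Finset.ne_of_mem_erase hw) h.symm
      simp [sub_eq_zero, this]
    rw [← Real.log_prod hne, ← norm_prod, key z hz]
    rw [norm_mul, norm_pow, habs z hz, one_pow, mul_one, Complex.norm_natCast]
  rw [Finset.sum_congr rfl hinner, Finset.sum_const, nsmul_eq_mul]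
  congr 1
  rw [hFeq, hprim.card_nthRootsFinset]
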